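/- Let β = (1+√5)/2. The intervals I_{n,J} = [L_{n,J}, L_{n,J} + j_n β^{−n−1} + (1 − j_n) β^{−n}) for J = (j_1,...,j_n) ∈ Ω_n are pairwise disjoint and their union is [0,1). -/
import Mathlib


open MeasureTheory Real Filter

/-- The golden ratio. -/
noncomputable def gr : ℝ := (1 + Real.sqrt 5) / 2

/-- Binary strings of length `n` with no two consecutive ones. -/
def Omega (n : ℕ) : Finset (Fin n → Fin 2) :=
  Finset.univ.filter fun J =>
    ∀ k : Fin n, ∀ h : k.val + 1 < n, (J k : ℕ) * (J ⟨k.val + 1, h⟩ : ℕ) = 0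

/-- `L (j_1,…,j_n) = ∑ j_k β^{-k}`. -/
noncomputable def L {n : ℕ} (J : Fin n → Fin 2) : ℝ :=
  ∑ k : Fin n, ((J k : ℕ) : ℝ) * gr ^ (-(k.val + 1 : ℤ))

/-- The last digit `j_n` of a string. -/
def lastD {n : ℕ} (J : Fin n → Fin 2) : ℕ :=
  if h : 0 < n then (J ⟨n - 1, Nat.sub_lt h one_pos⟩ : ℕ) else 0

/-- The length of `I_{n,J}`. -/
noncomputable def Ilen {n : ℕ} (J : Fin n → Fin 2) : ℝ :=
  (lastD J : ℝ) * gr ^ (-(n + 1 : ℤ)) + (1 - (lastD J : ℝ)) * gr ^ (-(n : ℤ))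

/-- The interval `I_{n,J}`. -/
noncomputable def Ival {n : ℕ} (J : Fin n → Fin 2) : Set ℝ :=
  Set.Ico (L J) (L J + Ilen J)

/-- The base-β transformation (β = golden ratio). -/
noncomputable def T (x : ℝ) : ℝ := gr * x - ⌊gr * x⌋

/-- The invariant density. -/
noncomputable def fGold (x : ℝ) : ℝ :=
  if x < gr⁻¹ then (1 + gr) / Real.sqrt 5 else gr / Real.sqrt 5

/-- The pdf of `T^n X` when `X` has pdf `f`. -/
noncomputable def evolve (n : ℕ) (f : ℝ → ℝ) (x : ℝ) : ℝ :=
  if x < gr⁻¹ then ∑ J ∈ Omega n, gr ^ (-(n : ℤ)) * f (L J + x * gr ^ (-(n : ℤ)))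
  else ∑ J ∈ (Omega n).filter (fun J => lastD J = 0),
    gr ^ (-(n : ℤ)) * f (L J + x * gr ^ (-(n : ℤ)))

-- basic gr facts
lemma sqrt5_pos : (0:ℝ) < Real.sqrt 5 := Real.sqrt_pos.mpr (by norm_num)

lemma gr_pos : (0:ℝ) < gr := by
  unfold gr; have := sqrt5_pos; linarith

lemma gr_ne : gr ≠ 0 := ne_of_gt gr_pos

lemma gr_gt_one : (1:ℝ) < gr := by
  unfold gr
  nlinarith [Real.sq_sqrt (by norm_num : (5:ℝ) ≥ 0), sqrt5_pos]

lemma gr_sq : gr ^ 2 = gr + 1 := by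
  unfold gr
  have h : Real.sqrt 5 ^ 2 = 5 := Real.sq_sqrt (by norm_num)
  ring_nf
  nlinarith [h]

lemma zpow_pos' (z : ℤ) : (0:ℝ) < gr ^ z := zpow_pos gr_pos z

lemma key_id (m : ℤ) : gr ^ (-(m+1)) + gr ^ (-(m+2)) = gr ^ (-m) := by
  have h1 : gr ^ (-(m+1)) = gr ^ (-(m+2)) * gr := by
    rw [show -(m+1) = -(m+2) + 1 by ring, zpow_add₀ gr_ne, zpow_one]
  have h2 : gr ^ (-m) = gr ^ (-(m+2)) * gr ^ (2:ℕ) := by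
    rw [show -m = -(m+2) + (2:ℕ) by push_cast; ring, zpow_add₀ gr_ne, zpow_natCast]
  rw [h1, h2, gr_sq]
  ring

lemma zpow_le' (m : ℤ) : gr ^ (-(m+1)) ≤ gr ^ (-m) := by
  have := zpow_pos' (-(m+2))
  linarith [key_id m]

-- snoc lemmas
lemma snoc_lt {n : ℕ} (J : Fin n → Fin 2) (d : Fin 2) (i : ℕ) (h : i < n) (h' : i < n+1) :
    (Fin.snoc J d : Fin (n+1) → Fin 2) ⟨i, h'⟩ = J ⟨i, h⟩ := by
  have : (⟨i, h'⟩ : Fin (n+1)) = Fin.castSucc ⟨i,h⟩ := rfl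
  rw [this, Fin.snoc_castSucc]

lemma snoc_last' {n : ℕ} (J : Fin n → Fin 2) (d : Fin 2) (h' : n < n+1) :
    (Fin.snoc J d : Fin (n+1) → Fin 2) ⟨n, h'⟩ = d := by
  have : (⟨n, h'⟩ : Fin (n+1)) = Fin.last n := rfl
  rw [this, Fin.snoc_last]

lemma lastD_snoc {n : ℕ} (J : Fin n → Fin 2) (d : Fin 2) :
    lastD (Fin.snoc J d) = (d : ℕ) := by
  rw [lastD, dif_pos (Nat.succ_pos n)]
  congr 1
  exact snoc_last' J d (Nat.lt_succ_self n)

lemma L_snoc {n : ℕ} (J : Fin n → Fin 2) (d : Fin 2) :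
    L (Fin.snoc J d) = L J + (d : ℕ) * gr ^ (-(n+1 : ℤ)) := by
  rw [L, Fin.sum_univ_castSucc]
  congr 1
  · rw [L]
    apply Finset.sum_congr rfl
    intro i _
    rw [Fin.snoc_castSucc]
    norm_num
  · rw [Fin.snoc_last]
    norm_num

lemma mem_Omega_snoc {n : ℕ} (J : Fin n → Fin 2) (d : Fin 2) :
    Fin.snoc J d ∈ Omega (n+1) ↔ J ∈ Omega n ∧ lastD J * (d : ℕ) = 0 := by
  simp only [Omega, Finset.mem_filter, Finset.mem_univ, true_and]
  constructor
  · intro H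
    constructor
    · intro k h
      have h1 : k.val < n + 1 := by omega
      have h2 : k.val + 1 < n + 1 := by omega
      have := H ⟨k.val, h1⟩ h2
      rwa [snoc_lt J d k.val k.isLt h1, snoc_lt J d (k.val+1) h h2,
        show (⟨k.val, k.isLt⟩ : Fin n) = k from rfl] at this
    · rcases Nat.eq_zero_or_pos n with hn | hn
      · subst hn; simp [lastD]
      · rw [lastD, dif_pos hn]
        have h1 : n - 1 < n + 1 := by omega
        have h2 : (n-1) + 1 < n + 1 := by omega
        have := H ⟨n-1, h1⟩ h2
        rw [snoc_lt J d (n-1) (by omega) h1] at this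
        rwa [show (⟨(n-1)+1, h2⟩ : Fin (n+1)) = ⟨n, by omega⟩ by ext; simp; omega,
          snoc_last' J d (by omega)] at this
  · rintro ⟨H1, H2⟩ k h
    rcases Nat.lt_or_ge (k.val + 1) n with hk | hk
    · have hkn : k.val < n := by omega
      rw [snoc_lt J d k.val hkn (by omega), snoc_lt J d (k.val+1) hk h]
      exact H1 ⟨k.val, hkn⟩ hk
    · have hkn : k.val + 1 = n := by omega
      have hk0 : k.val < n := by omega
      rw [snoc_lt J d k.val hk0 (by omega),
        show (⟨k.val+1, h⟩ : Fin (n+1)) = ⟨n, by omega⟩ by ext; simp [hkn],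
        snoc_last' J d (by omega)]
      have : lastD J = (J ⟨n-1, by omega⟩ : ℕ) := by rw [lastD, dif_pos (by omega : 0 < n)]
      rw [show (⟨k.val, hk0⟩ : Fin n) = ⟨n-1, by omega⟩ by ext; simp; omega]
      rw [← this]; exact H2

lemma lastD_le_one {n : ℕ} (J : Fin n → Fin 2) : lastD J ≤ 1 := by
  rw [lastD]
  split
  · omega
  · omega

lemma Ival_eq_zero {n : ℕ} (J : Fin n → Fin 2) (h : lastD J = 0) :
    Ival J = Set.Ico (L J) (L J + gr ^ (-(n:ℤ))) := by
  rw [Ival, Ilen, h]; norm_num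

lemma Ival_eq_one {n : ℕ} (J : Fin n → Fin 2) (h : lastD J = 1) :
    Ival J = Set.Ico (L J) (L J + gr ^ (-(n+1:ℤ))) := by
  rw [Ival, Ilen, h]; norm_num

lemma Ival_snoc_zero {n : ℕ} (J : Fin n → Fin 2) :
    Ival (Fin.snoc J (0:Fin 2)) = Set.Ico (L J) (L J + gr ^ (-(n+1:ℤ))) := by
  rw [Ival_eq_zero _ (by rw [lastD_snoc]; rfl), L_snoc]
  push_cast
  norm_num

lemma Ival_snoc_one {n : ℕ} (J : Fin n → Fin 2) :
    Ival (Fin.snoc J (1:Fin 2)) =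
      Set.Ico (L J + gr ^ (-(n+1:ℤ))) (L J + gr ^ (-(n:ℤ))) := by
  rw [Ival_eq_one _ (by rw [lastD_snoc]; rfl), L_snoc]
  push_cast
  have := key_id (n : ℤ)
  have e : ((n:ℤ)+1)+1 = (n:ℤ)+2 := by ring
  rw [show (-(↑n + 1 + 1) : ℤ) = -((n:ℤ)+2) by ring,
    show (((1:Fin 2):ℕ):ℝ) = 1 from by norm_num, one_mul,
    show L J + gr ^ (-((n:ℤ) + 1)) + gr ^ (-((n:ℤ) + 2)) = L J + gr ^ (-(n:ℤ)) from by
      have := key_id (n : ℤ); linarith]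

-- children are inside the parent
lemma Ival_snoc_subset {n : ℕ} (J : Fin n → Fin 2) (d : Fin 2)
    (hd : lastD J * (d : ℕ) = 0) : Ival (Fin.snoc J d) ⊆ Ival J := by
  have hle := zpow_le' (n : ℤ)
  have hpos1 := zpow_pos' (-(n:ℤ)+ -1)
  rcases (by omega : (d:ℕ) = 0 ∨ (d:ℕ) = 1) with h0 | h1
  · have hd0 : d = 0 := Fin.ext h0
    subst hd0
    rw [Ival_snoc_zero]
    rcases Nat.le_one_iff_eq_zero_or_eq_one.mp (lastD_le_one J) with hl | hl
    · rw [Ival_eq_zero _ hl]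
      exact Set.Ico_subset_Ico le_rfl (by linarith)
    · rw [Ival_eq_one _ hl]
  · have hd1 : d = 1 := Fin.ext h1
    subst hd1
    have hl : lastD J = 0 := by simpa using hd
    rw [Ival_snoc_one, Ival_eq_zero _ hl]
    have := zpow_pos' (-((n:ℤ)+1))
    exact Set.Ico_subset_Ico (by linarith) le_rfl

-- children cover the parent
lemma Ival_snoc_cover {n : ℕ} (J : Fin n → Fin 2) {x : ℝ} (hx : x ∈ Ival J) :
    ∃ d : Fin 2, lastD J * (d : ℕ) = 0 ∧ x ∈ Ival (Fin.snoc J d) := by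
  rcases Nat.le_one_iff_eq_zero_or_eq_one.mp (lastD_le_one J) with hl | hl
  · rw [Ival_eq_zero _ hl] at hx
    by_cases hxx : x < L J + gr ^ (-(n+1:ℤ))
    · exact ⟨0, by simp, by rw [Ival_snoc_zero]; exact ⟨hx.1, hxx⟩⟩
    · exact ⟨1, by simp [hl], by rw [Ival_snoc_one]; exact ⟨not_lt.mp hxx, hx.2⟩⟩
  · rw [Ival_eq_one _ hl] at hx
    exact ⟨0, by simp, by rw [Ival_snoc_zero]; exact hx⟩

-- siblings are disjoint
lemma Ival_snoc_disjoint {n : ℕ} (J : Fin n → Fin 2) :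
    Disjoint (Ival (Fin.snoc J (0:Fin 2))) (Ival (Fin.snoc J (1:Fin 2))) := by
  rw [Ival_snoc_zero, Ival_snoc_one]
  exact Set.Ico_disjoint_Ico_same

lemma Ival_zero (J : Fin 0 → Fin 2) : Ival J = Set.Ico (0:ℝ) 1 := by
  have hL : L J = 0 := by simp [L]
  have hI : Ilen J = 1 := by
    rw [Ilen, lastD, dif_neg (lt_irrefl 0)]
    norm_num
  rw [Ival, hL, hI, zero_add]

lemma main_all (n : ℕ) :
    ((Omega n : Set (Fin n → Fin 2)).PairwiseDisjoint fun J => Ival J) ∧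
    (⋃ J ∈ Omega n, Ival J) = Set.Ico (0 : ℝ) 1 := by
  induction n with
  | zero =>
    constructor
    · intro a _ b _ hne
      exact absurd (Subsingleton.elim a b) hne
    · ext x
      rw [Set.mem_iUnion₂]
      constructor
      · rintro ⟨J, _, hx⟩
        rwa [Ival_zero] at hx
      · intro hx
        exact ⟨fun i => i.elim0, by
          simp only [Omega, Finset.mem_filter, Finset.mem_univ, true_and]
          exact fun k => k.elim0, by rwa [Ival_zero]⟩
  | succ n ih =>
    obtain ⟨ihd, ihc⟩ := ih
    constructor
    · intro J1' h1 J2' h2 hne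
      simp only [Function.onFun]
      rw [Finset.mem_coe] at h1 h2
      have e1 : Fin.snoc (Fin.init J1') (J1' (Fin.last n)) = J1' := Fin.snoc_init_self J1'
      have e2 : Fin.snoc (Fin.init J2') (J2' (Fin.last n)) = J2' := Fin.snoc_init_self J2'
      rw [← e1] at h1
      rw [← e2] at h2
      have m1 := (mem_Omega_snoc _ _).mp h1
      have m2 := (mem_Omega_snoc _ _).mp h2
      by_cases hJ : Fin.init J1' = Fin.init J2'
      · have hd : J1' (Fin.last n) ≠ J2' (Fin.last n) := by
          intro h
          exact hne (by rw [← e1, ← e2, hJ, h])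
        rw [← e1, ← e2, ← hJ]
        rcases (by omega : ((J1' (Fin.last n) : ℕ) = 0 ∧ (J2' (Fin.last n) : ℕ) = 1) ∨
            ((J1' (Fin.last n) : ℕ) = 1 ∧ (J2' (Fin.last n) : ℕ) = 0) ∨
            (J1' (Fin.last n) : ℕ) = (J2' (Fin.last n) : ℕ)) with h | h | h
        · rw [show J1' (Fin.last n) = 0 from Fin.ext (by simp [h.1]),
            show J2' (Fin.last n) = 1 from Fin.ext (by simp [h.2])]
          exact Ival_snoc_disjoint _
        · rw [show J1' (Fin.last n) = 1 from Fin.ext (by simp [h.1]),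
            show J2' (Fin.last n) = 0 from Fin.ext (by simp [h.2])]
          exact (Ival_snoc_disjoint _).symm
        · exact absurd (Fin.ext h) hd
      · refine Disjoint.mono ?_ ?_ (ihd m1.1 m2.1 hJ)
        · have := Ival_snoc_subset (Fin.init J1') (J1' (Fin.last n)) m1.2
          rwa [e1] at this
        · have := Ival_snoc_subset (Fin.init J2') (J2' (Fin.last n)) m2.2
          rwa [e2] at this
    · ext x
      rw [Set.mem_iUnion₂]
      constructor
      · rintro ⟨J', hJ', hx⟩
        have e : Fin.snoc (Fin.init J') (J' (Fin.last n)) = J' := Fin.snoc_init_self J'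
        rw [← e] at hJ' hx
        have m := (mem_Omega_snoc _ _).mp hJ'
        have hx' : x ∈ Ival (Fin.init J') := Ival_snoc_subset _ _ m.2 hx
        have : x ∈ ⋃ J ∈ Omega n, Ival J := Set.mem_biUnion m.1 hx'
        rwa [ihc] at this
      · intro hx
        rw [← ihc] at hx
        obtain ⟨J, hJ, hxJ⟩ := Set.mem_iUnion₂.mp hx
        obtain ⟨d, hd, hxd⟩ := Ival_snoc_cover J hxJ
        exact ⟨Fin.snoc J d, (mem_Omega_snoc J d).mpr ⟨hJ, hd⟩, hxd⟩


theorem Ival_partition (n : ℕ) (hn : 0 < n) :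
    ((Omega n : Set (Fin n → Fin 2)).PairwiseDisjoint fun J => Ival J) ∧
    (⋃ J ∈ Omega n, Ival J) = Set.Ico (0 : ℝ) 1 := main_all n
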